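/- Let γ : ℝ → ℂ be continuous with γ(0) = 1, satisfying γ(2t) = γ(t)² for all t, and γ(t) = 1 + o(t²) as t → 0. Then γ(t) = 1 for all t ∈ ℝ. -/

import Mathlib

open Filter Finset

lemma pow_sub_one_norm_aux (z : ℂ) (n : ℕ) :
    ‖z ^ n - 1‖ ≤ n * ‖z - 1‖ * (max 1 ‖z‖) ^ n := by
  have h := geom_sum_mul z n
  have hsum : ‖∑ i ∈ range n, z ^ i‖ ≤ n * (max 1 ‖z‖) ^ n := by
    calc ‖∑ i ∈ range n, z ^ i‖ ≤ ∑ i ∈ range n, ‖z ^ i‖ := norm_sum_le _ _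
      _ ≤ ∑ _i ∈ range n, (max 1 ‖z‖) ^ n := by
          refine Finset.sum_le_sum fun i hi => ?_
          rw [norm_pow]
          calc ‖z‖ ^ i ≤ (max 1 ‖z‖) ^ i :=
                pow_le_pow_left₀ (norm_nonneg z) (le_max_right _ _) i
            _ ≤ (max 1 ‖z‖) ^ n :=
                pow_le_pow_right₀ (le_max_left _ _) (Finset.mem_range.1 hi).le
      _ = n * (max 1 ‖z‖) ^ n := by
          rw [Finset.sum_const, Finset.card_range, nsmul_eq_mul]
  calc ‖z ^ n - 1‖ = ‖(∑ i ∈ range n, z ^ i) * (z - 1)‖ := by rw [h]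
    _ = ‖∑ i ∈ range n, z ^ i‖ * ‖z - 1‖ := norm_mul _ _
    _ ≤ (n * (max 1 ‖z‖) ^ n) * ‖z - 1‖ :=
        mul_le_mul_of_nonneg_right hsum (norm_nonneg _)
    _ = n * ‖z - 1‖ * (max 1 ‖z‖) ^ n := by ring

theorem gamma_funEq_eq_one
    (γ : ℝ → ℂ) (hcont : Continuous γ) (h0 : γ 0 = 1)
    (heq : ∀ t : ℝ, γ (2 * t) = γ t ^ 2)
    (hexp : Filter.Tendsto (fun t : ℝ => (γ t - 1) / (t : ℂ) ^ 2)
      (nhdsWithin 0 {0}ᶜ) (nhds 0)) :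
    ∀ t : ℝ, γ t = 1 := by
  intro t
  rcases eq_or_ne t 0 with rfl | ht
  · exact h0
  have key : ∀ n : ℕ, γ t = γ (t / 2 ^ n) ^ (2 ^ n : ℕ) := by
    intro n
    induction n with
    | zero => simp
    | succ n ih =>
      have h2 : γ (t / 2 ^ n) = γ (t / 2 ^ (n + 1)) ^ 2 := by
        rw [← heq]
        congr 1
        field_simp
        ring
      rw [ih, h2, ← pow_mul]
      congr 1
      rw [pow_succ]
      ring
  rw [Metric.tendsto_nhdsWithin_nhds] at hexp
  obtain ⟨δ, hδ, hd⟩ := hexp 1 one_pos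
  have hsmall : ∀ s : ℝ, s ≠ 0 → |s| < δ → ‖γ s - 1‖ ≤ s ^ 2 := by
    intro s hs hsδ
    have hmem : s ∈ ({0}ᶜ : Set ℝ) := hs
    have hdist : dist s 0 < δ := by simpa [Real.dist_eq] using hsδ
    have h1 := hd hmem hdist
    rw [dist_zero_right, norm_div] at h1
    have hz : ‖((s : ℂ)) ^ 2‖ = s ^ 2 := by
      rw [norm_pow, Complex.norm_real, Real.norm_eq_abs, sq_abs]
    rw [hz] at h1
    have hzpos : (0:ℝ) < s ^ 2 := by positivity
    have := (div_lt_one hzpos).1 h1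
    linarith
  have htend : Tendsto (fun n : ℕ => |t| * (1/2 : ℝ) ^ n) atTop (nhds 0) := by
    simpa using (tendsto_pow_atTop_nhds_zero_of_lt_one (by norm_num : (0:ℝ) ≤ 1/2)
      (by norm_num : (1/2:ℝ) < 1)).const_mul |t|
  have hev : ∀ᶠ n : ℕ in atTop, |t| * (1/2:ℝ) ^ n < δ :=
    htend.eventually (gt_mem_nhds hδ)
  have hbtend : Tendsto (fun n : ℕ => t ^ 2 * Real.exp (t ^ 2) * (1/2:ℝ) ^ n)
      atTop (nhds 0) := by
    simpa using (tendsto_pow_atTop_nhds_zero_of_lt_one (by norm_num : (0:ℝ) ≤ 1/2)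
      (by norm_num : (1/2:ℝ) < 1)).const_mul (t ^ 2 * Real.exp (t ^ 2))
  have hle : ‖γ t - 1‖ ≤ 0 := by
    refine ge_of_tendsto hbtend ?_
    filter_upwards [hev] with n hn
    set s : ℝ := t / 2 ^ n with hs
    have h2n : (0:ℝ) < 2 ^ n := by positivity
    have h1le : (1:ℝ) ≤ 2 ^ n := by simpa using pow_le_pow_right₀ (by norm_num : (1:ℝ) ≤ 2) (Nat.zero_le n)
    have hsne : s ≠ 0 := by
      simp [hs, div_eq_zero_iff, ht, h2n.ne']
    have habs : |s| = |t| * (1/2:ℝ) ^ n := by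
      rw [hs, abs_div, abs_pow]
      rw [abs_two]
      field_simp
      rw [← mul_pow]; norm_num
    have hsd : |s| < δ := by rw [habs]; exact hn
    have h1 : ‖γ s - 1‖ ≤ s ^ 2 := hsmall s hsne hsd
    have hM : max 1 ‖γ s‖ ≤ 1 + s ^ 2 := by
      refine max_le (by nlinarith [sq_nonneg s]) ?_
      calc ‖γ s‖ = ‖(γ s - 1) + 1‖ := by ring_nf
        _ ≤ ‖γ s - 1‖ + ‖(1:ℂ)‖ := norm_add_le _ _
        _ ≤ 1 + s ^ 2 := by rw [norm_one]; linarith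
    have hs2t : (2:ℝ) ^ n * s ^ 2 ≤ t ^ 2 := by
      have hse : (2:ℝ) ^ n * s ^ 2 = t ^ 2 / 2 ^ n := by
        rw [hs]; field_simp
      rw [hse]; exact div_le_self (sq_nonneg t) h1le
    have hMpow : (max 1 ‖γ s‖) ^ (2 ^ n) ≤ Real.exp (t ^ 2) := by
      calc (max 1 ‖γ s‖) ^ (2 ^ n) ≤ (1 + s ^ 2) ^ (2 ^ n) :=
            pow_le_pow_left₀ (le_trans zero_le_one (le_max_left _ _)) hM _
        _ ≤ (Real.exp (s ^ 2)) ^ (2 ^ n) :=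
            pow_le_pow_left₀ (by positivity) (by linarith [Real.add_one_le_exp (s ^ 2)]) _
        _ = Real.exp ((2 ^ n : ℕ) * s ^ 2) := by rw [← Real.exp_nat_mul]
        _ ≤ Real.exp (t ^ 2) := by
            apply Real.exp_le_exp.2
            push_cast
            exact hs2t
    calc ‖γ t - 1‖ = ‖γ s ^ (2 ^ n : ℕ) - 1‖ := by rw [key n]
      _ ≤ (2 ^ n : ℕ) * ‖γ s - 1‖ * (max 1 ‖γ s‖) ^ (2 ^ n) :=
          pow_sub_one_norm_aux _ _
      _ ≤ (2 ^ n : ℕ) * s ^ 2 * Real.exp (t ^ 2) := by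
          apply mul_le_mul
          · apply mul_le_mul_of_nonneg_left h1 (by positivity)
          · exact hMpow
          · positivity
          · positivity
      _ = t ^ 2 * Real.exp (t ^ 2) * (1/2:ℝ) ^ n := by
          push_cast
          rw [hs]
          field_simp
          ring
          rw [← mul_pow]; norm_num
  have hsub : γ t - 1 = 0 :=
    norm_eq_zero.1 (le_antisymm hle (norm_nonneg _))
  exact sub_eq_zero.1 hsub
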